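/- Let μ ≥ 0, α₂ > μ/2, α₃ > 0, τ₂, τ₃ > 0, τ = max{τ₂, τ₃}, λ > 0, q ∈ (0,1], R_q > 0, ω > 0, ε̄ ≥ 0, δ ≥ 0, and set ε(δ) = 2 min{δ/λ, ω} and ζ = τ λ^{−q} R_q. Let L, Q : ℝ^{d₁×d₂} → ℝ be differentiable with, for all Θ, Θ′: α₂‖Θ−Θ′‖_F² − τ₂‖Θ−Θ′‖_*² ≤ T_L(Θ,Θ′) ≤ α₃‖Θ−Θ′‖_F² + τ₃‖Θ−Θ′‖_*², and Q(Θ′) + ⟨⟨∇Q(Θ′), Θ−Θ′⟩⟩ − (μ/2)‖Θ−Θ′‖_F² ≤ Q(Θ) ≤ Q(Θ′) + ⟨⟨∇Q(Θ′), Θ−Θ′⟩⟩. Set Ψ = L + Q + λ‖·‖_* and Ω = {Θ : ‖Θ‖_* ≤ ω}. Let Θ̂ ∈ Ω be a global minimizer of Ψ over Ω for which there exists G with ‖Θ‖_* ≥ ‖Θ̂‖_* + ⟨⟨G, Θ−Θ̂⟩⟩ for all Θ and ⟨⟨∇L(Θ̂)+∇Q(Θ̂)+λG, Θ−Θ̂⟩⟩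 ≥ 0 for all Θ ∈ Ω. Let v ≥ 2α₃ with v ≥ (2α₂−μ)/4, and let (Θᵗ) ⊆ Ω satisfy, for each t, that Θ^{t+1} minimizes over Ω the map Θ ↦ ⟨⟨∇L(Θᵗ)+∇Q(Θᵗ), Θ−Θᵗ⟩⟩ + (v/2)‖Θ−Θᵗ‖_F² + λ‖Θ‖_*. Assume λ^q ≥ 256τR_q/(2α₂−μ), 512ζ < 2α₂−μ, and κ ∈ (0,1), where κ = [1 − (2α₂−μ)/(8v) + 512ζ/(2α₂−μ)] / [1 − 512ζ/(2α₂−μ)] and ξ = 2τ[(2α₂−μ)/(8v) + 1024ζ/(2α₂−μ) + 5] / [1 − 512ζ/(2α₂−μ)]. Finally suppose there is an integer T such that for all t ≥ T: Ψ(Θᵗ) − Ψ(Θ̂) ≤ δ and ‖Θᵗ − Θ̂‖_* ≤ 4√2 λ^{−q/2} R_q^{1/2} ‖Θᵗ − Θ̂‖_F + ε̄ + ε(δ). Then for all t ≥ T: Ψ(Θᵗ) − Ψ(Θ̂) ≤ κ^{t−T}(Ψ(Θ^T) − Ψ(Θ̂)) + (2ξ/(1−κ))(ε̄² + ε(δ)²).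 -/

import Mathlib

open Matrix Finset

attribute [local instance] Matrix.frobeniusNormedAddCommGroup Matrix.frobeniusNormedSpace

noncomputable section

variable {d₁ d₂ : ℕ}

/-- Trace inner product `⟨⟨A,B⟩⟩ = trace(AᵀB)`. -/
def tinner (A B : Matrix (Fin d₁) (Fin d₂) ℝ) : ℝ := (Aᵀ * B).trace

/-- Frobenius norm. -/
def frobNorm (A : Matrix (Fin d₁) (Fin d₂) ℝ) : ℝ := Real.sqrt (∑ i, ∑ j, (A i j) ^ 2)

/-- The (unordered, zero-padded) singular values of `A`: the square roots of the
eigenvalues of `AᵀA`. -/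
def svals (A : Matrix (Fin d₁) (Fin d₂) ℝ) : Fin d₂ → ℝ :=
  fun j => Real.sqrt ((Matrix.isHermitian_conjTranspose_mul_self A).eigenvalues j)

/-- Nuclear norm: sum of singular values. -/
def nuclearNorm (A : Matrix (Fin d₁) (Fin d₂) ℝ) : ℝ := ∑ j, svals A j

/-- Operator norm: largest singular value. -/
def opNorm (A : Matrix (Fin d₁) (Fin d₂) ℝ) : ℝ := ⨆ j, svals A j

/-- The `d₁ × d₂` "diagonal" matrix whose diagonal entries are given by `s`. -/
def svdDiag (s : Fin (min d₁ d₂) → ℝ) : Matrix (Fin d₁) (Fin d₂) ℝ :=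
  Matrix.of fun i j =>
    if h : (i : ℕ) = (j : ℕ) then
      s ⟨(i : ℕ), by have := i.isLt; have := j.isLt; omega⟩ else 0

/-- `s` is the nonincreasing sequence of singular values of `A`, witnessed by a
singular value decomposition `A = U D Vᵀ` with `U, V` orthogonal. -/
def IsSVDOf (A : Matrix (Fin d₁) (Fin d₂) ℝ) (s : Fin (min d₁ d₂) → ℝ) : Prop :=
  Antitone s ∧ (∀ j, 0 ≤ s j) ∧
    ∃ (U : Matrix (Fin d₁) (Fin d₁) ℝ) (V : Matrix (Fin d₂) (Fin d₂) ℝ),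
      Uᵀ * U = 1 ∧ U * Uᵀ = 1 ∧ Vᵀ * V = 1 ∧ V * Vᵀ = 1 ∧ A = U * svdDiag s * Vᵀ

/-- Assumption 1 of the paper on the univariate regularizer `p = p_λ`,
with concave part `q_λ t = p t - λ * |t|`. -/
structure Assumption1 (p : ℝ → ℝ) (lam μ : ℝ) : Prop where
  zero : p 0 = 0
  even : ∀ t : ℝ, p (-t) = p t
  slope_anti : AntitoneOn (fun t => p t / t) (Set.Ioi (0 : ℝ))
  diffable : ∀ t : ℝ, t ≠ 0 → DifferentiableAt ℝ p t
  deriv_tendsto : Filter.Tendsto (deriv p) (nhdsWithin 0 (Set.Ioi 0)) (nhds lam)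
  mono : MonotoneOn p (Set.Ici (0 : ℝ))
  concave : ConcaveOn ℝ (Set.Ici (0 : ℝ)) p
  weakconv : ∀ t t' : ℝ, 0 < t' → t' < t →
    deriv (fun u => p u - lam * |u|) t - deriv (fun u => p u - lam * |u|) t' ≥ -μ * (t - t')

/-- The spectral regularizer `P_λ(Θ) = ∑ⱼ p_λ(σⱼ(Θ))`. -/
def Pl (p : ℝ → ℝ) (A : Matrix (Fin d₁) (Fin d₂) ℝ) : ℝ := ∑ j, p (svals A j)

end


noncomputable section Helpers

variable {d₁ d₂ : ℕ}

/-- contraction property: `‖Bx‖₂ ≤ ‖x‖₂` in entrywise-sum form. -/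
def Contr (B : Matrix (Fin d₁) (Fin d₂) ℝ) : Prop :=
  ∀ x : Fin d₂ → ℝ, ∑ i, (B.mulVec x i) ^ 2 ≤ ∑ j, (x j) ^ 2

lemma exists_eigen (A : Matrix (Fin d₁) (Fin d₂) ℝ) :
    ∃ (V : Matrix (Fin d₂) (Fin d₂) ℝ) (e : Fin d₂ → ℝ),
      Vᵀ * V = 1 ∧ V * Vᵀ = 1 ∧ Aᵀ * A = V * Matrix.diagonal e * Vᵀ ∧
      (∀ j, 0 ≤ e j) ∧ nuclearNorm A = ∑ j, Real.sqrt (e j) := by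
  classical
  have hH := Matrix.isHermitian_conjTranspose_mul_self A
  set V : Matrix (Fin d₂) (Fin d₂) ℝ :=
    (Matrix.IsHermitian.eigenvectorUnitary hH : Matrix (Fin d₂) (Fin d₂) ℝ) with hV
  refine ⟨V, hH.eigenvalues, ?_, ?_, ?_,
    fun j => (Matrix.posSemidef_conjTranspose_mul_self A).eigenvalues_nonneg j, rfl⟩
  · have := (Matrix.mem_unitaryGroup_iff').mp (Matrix.IsHermitian.eigenvectorUnitary hH).2
    simpa [Matrix.star_eq_conjTranspose, Matrix.conjTranspose_eq_transpose_of_trivial, hV] using this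
  · have := (Matrix.mem_unitaryGroup_iff).mp (Matrix.IsHermitian.eigenvectorUnitary hH).2
    simpa [Matrix.star_eq_conjTranspose, Matrix.conjTranspose_eq_transpose_of_trivial, hV] using this
  · have h := hH.spectral_theorem
    have : Aᴴ * A = V * Matrix.diagonal hH.eigenvalues * Vᵀ := by
      simpa [Matrix.star_eq_conjTranspose, Matrix.conjTranspose_eq_transpose_of_trivial,
        Function.comp, hV] using h
    simpa [Matrix.conjTranspose_eq_transpose_of_trivial] using this

lemma sum_sq_col {n m : ℕ} (M : Matrix (Fin n) (Fin m) ℝ) (j : Fin m) :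
    ∑ i, (M i j) ^ 2 = (Mᵀ * M) j j := by
  simp [Matrix.mul_apply, sq]

lemma nuclearNorm_nonneg (A : Matrix (Fin d₁) (Fin d₂) ℝ) : 0 ≤ nuclearNorm A :=
  Finset.sum_nonneg fun j _ => Real.sqrt_nonneg _

lemma frobNorm_nonneg (A : Matrix (Fin d₁) (Fin d₂) ℝ) : 0 ≤ frobNorm A :=
  Real.sqrt_nonneg _

lemma frobNorm_sq (A : Matrix (Fin d₁) (Fin d₂) ℝ) :
    frobNorm A ^ 2 = ∑ i, ∑ j, (A i j) ^ 2 :=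
  Real.sq_sqrt (by positivity)

lemma frobNorm_smul (c : ℝ) (A : Matrix (Fin d₁) (Fin d₂) ℝ) :
    frobNorm (c • A) = |c| * frobNorm A := by
  unfold frobNorm
  have h1 : ∑ i, ∑ j, ((c • A) i j) ^ 2 = c ^ 2 * ∑ i, ∑ j, (A i j) ^ 2 := by
    simp only [Matrix.smul_apply, smul_eq_mul, mul_pow, Finset.mul_sum]
  rw [h1, Real.sqrt_mul (sq_nonneg c), Real.sqrt_sq_eq_abs]

lemma frobNorm_neg (A : Matrix (Fin d₁) (Fin d₂) ℝ) : frobNorm (-A) = frobNorm A := by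
  rw [← neg_one_smul ℝ A, frobNorm_smul]; simp

lemma tinner_add_left (A B C : Matrix (Fin d₁) (Fin d₂) ℝ) :
    tinner (A + B) C = tinner A C + tinner B C := by
  simp [tinner, Matrix.transpose_add, Matrix.add_mul]

lemma tinner_add_right (A B C : Matrix (Fin d₁) (Fin d₂) ℝ) :
    tinner A (B + C) = tinner A B + tinner A C := by
  simp [tinner, Matrix.mul_add]

lemma tinner_smul_left (c : ℝ) (A B : Matrix (Fin d₁) (Fin d₂) ℝ) :
    tinner (c • A) B = c * tinner A B := by
  simp [tinner, Matrix.transpose_smul, Matrix.smul_mul]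

lemma tinner_smul_right (c : ℝ) (A B : Matrix (Fin d₁) (Fin d₂) ℝ) :
    tinner A (c • B) = c * tinner A B := by
  simp [tinner, Matrix.mul_smul]

lemma tinner_neg_left (A B : Matrix (Fin d₁) (Fin d₂) ℝ) :
    tinner (-A) B = - tinner A B := by
  simp [tinner, Matrix.transpose_neg, Matrix.neg_mul]

lemma tinner_neg_right (A B : Matrix (Fin d₁) (Fin d₂) ℝ) :
    tinner A (-B) = - tinner A B := by
  simp [tinner, Matrix.mul_neg]

lemma sum_sq_mulVec {n m : ℕ} (M : Matrix (Fin n) (Fin m) ℝ) (x : Fin m → ℝ) :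
    ∑ i, (M.mulVec x i) ^ 2 = x ⬝ᵥ ((Mᵀ * M).mulVec x) := by
  rw [← Matrix.mulVec_mulVec, Matrix.dotProduct_mulVec, Matrix.vecMul_transpose]
  simp [dotProduct, sq]

lemma Contr.neg {B : Matrix (Fin d₁) (Fin d₂) ℝ} (hB : Contr B) : Contr (-B) := by
  intro x
  simpa [Matrix.neg_mulVec, Pi.neg_apply, neg_sq] using hB x

lemma tinner_le_nuclearNorm (A B : Matrix (Fin d₁) (Fin d₂) ℝ) (hB : Contr B) :
    tinner B A ≤ nuclearNorm A := by
  classical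
  obtain ⟨V, e, hV1, hV2, hspec, he, hnn⟩ := exists_eigen A
  have key : tinner B A = ∑ j, ∑ i, (B * V) i j * (A * V) i j := by
    calc tinner B A = ((Bᵀ * A) * (V * Vᵀ)).trace := by
          rw [hV2, Matrix.mul_one]; rfl
      _ = (((Bᵀ * A) * V) * Vᵀ).trace := by simp only [Matrix.mul_assoc]
      _ = (Vᵀ * ((Bᵀ * A) * V)).trace := Matrix.trace_mul_comm _ _
      _ = ((B * V)ᵀ * (A * V)).trace := by
          congr 1
          simp only [Matrix.transpose_mul, Matrix.mul_assoc]
      _ = ∑ j, ∑ i, (B * V) i j * (A * V) i j := by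
          simp [Matrix.trace, Matrix.diag, Matrix.mul_apply, mul_comm]
  rw [key, hnn]
  apply Finset.sum_le_sum
  intro j _
  have hb : ∑ i, ((B * V) i j) ^ 2 ≤ 1 := by
    have hcol : ∀ i, (B * V) i j = B.mulVec (fun k => V k j) i := fun i => by
      simp [Matrix.mul_apply, Matrix.mulVec, dotProduct]
    have h1 : ∑ i, ((B * V) i j) ^ 2 ≤ ∑ k, (V k j) ^ 2 := by
      calc ∑ i, ((B * V) i j) ^ 2 = ∑ i, (B.mulVec (fun k => V k j) i) ^ 2 := by
            simp_rw [hcol]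
        _ ≤ ∑ k, (V k j) ^ 2 := by simpa using hB (fun k => V k j)
    have h2 : ∑ k, (V k j) ^ 2 = 1 := by
      rw [sum_sq_col V j, hV1]; simp [Matrix.one_apply]
    linarith
  have ha : ∑ i, ((A * V) i j) ^ 2 = e j := by
    rw [sum_sq_col (A * V) j]
    have h3 : (A * V)ᵀ * (A * V) = Matrix.diagonal e := by
      have h4 : (A * V)ᵀ * (A * V) = Vᵀ * (Aᵀ * A) * V := by
        simp only [Matrix.transpose_mul, Matrix.mul_assoc]
      rw [h4, hspec]
      calc Vᵀ * (V * Matrix.diagonal e * Vᵀ) * V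
          = (Vᵀ * V) * Matrix.diagonal e * (Vᵀ * V) := by simp only [Matrix.mul_assoc]
        _ = Matrix.diagonal e := by rw [hV1]; simp
    rw [h3]; simp
  have hcs := Finset.sum_mul_sq_le_sq_mul_sq Finset.univ
      (fun i => (B * V) i j) (fun i => (A * V) i j)
  have hnns : 0 ≤ ∑ i, ((A * V) i j) ^ 2 := by positivity
  have hle : (∑ i, (B * V) i j * (A * V) i j) ^ 2 ≤ e j := by
    calc (∑ i, (B * V) i j * (A * V) i j) ^ 2
        ≤ (∑ i, ((B * V) i j) ^ 2) * (∑ i, ((A * V) i j) ^ 2) := by simpa using hcs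
      _ ≤ 1 * e j := by rw [ha]; exact mul_le_mul_of_nonneg_right hb (ha ▸ hnns)
      _ = e j := one_mul _
  calc ∑ i, (B * V) i j * (A * V) i j
      ≤ Real.sqrt ((∑ i, (B * V) i j * (A * V) i j) ^ 2) := by
        rw [Real.sqrt_sq_eq_abs]; exact le_abs_self _
    _ ≤ Real.sqrt (e j) := Real.sqrt_le_sqrt hle

lemma exists_contr_tinner_eq (A : Matrix (Fin d₁) (Fin d₂) ℝ) :
    ∃ B : Matrix (Fin d₁) (Fin d₂) ℝ, Contr B ∧ tinner B A = nuclearNorm A := by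
  classical
  obtain ⟨V, e, hV1, hV2, hspec, he, hnn⟩ := exists_eigen A
  set g : Fin d₂ → ℝ := fun j => (Real.sqrt (e j))⁻¹ with hg
  have hge : ∀ j, g j * e j = Real.sqrt (e j) := by
    intro j
    rcases eq_or_lt_of_le (he j) with h0 | h
    · simp [hg, ← h0]
    · have hmul : Real.sqrt (e j) * Real.sqrt (e j) = e j := Real.mul_self_sqrt (le_of_lt h)
      have hs : Real.sqrt (e j) ≠ 0 := by positivity
      rw [hg]
      show (Real.sqrt (e j))⁻¹ * e j = Real.sqrt (e j)
      field_simp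
      rw [sq, hmul]
  set M : Matrix (Fin d₂) (Fin d₂) ℝ := V * Matrix.diagonal g * Vᵀ with hM
  have hMt : Mᵀ = M := by
    rw [hM]; simp only [Matrix.transpose_mul, Matrix.transpose_transpose,
      Matrix.diagonal_transpose, Matrix.mul_assoc]
  refine ⟨A * M, ?_, ?_⟩
  · -- contraction
    intro x
    have hBtB : (A * M)ᵀ * (A * M) = V * Matrix.diagonal (g * e * g) * Vᵀ := by
      have h1 : (A * M)ᵀ * (A * M) = Mᵀ * (Aᵀ * A) * M := by
        simp only [Matrix.transpose_mul, Matrix.mul_assoc]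
      rw [h1, hMt, hspec, hM]
      calc V * Matrix.diagonal g * Vᵀ * (V * Matrix.diagonal e * Vᵀ) * (V * Matrix.diagonal g * Vᵀ)
          = V * (Matrix.diagonal g * ((Vᵀ * V) * (Matrix.diagonal e * ((Vᵀ * V) *
              (Matrix.diagonal g * Vᵀ))))) := by
            simp only [Matrix.mul_assoc]
        _ = V * (Matrix.diagonal g * Matrix.diagonal e * Matrix.diagonal g) * Vᵀ := by
            rw [hV1]; simp only [Matrix.one_mul, Matrix.mul_assoc]
        _ = V * Matrix.diagonal (g * e * g) * Vᵀ := by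
            rw [Matrix.diagonal_mul_diagonal, Matrix.diagonal_mul_diagonal]; rfl
    rw [sum_sq_mulVec, hBtB]
    set y : Fin d₂ → ℝ := Vᵀ.mulVec x with hy
    have hyx : ∑ j, (y j) ^ 2 = ∑ j, (x j) ^ 2 := by
      have h5 := sum_sq_mulVec Vᵀ x
      rw [Matrix.transpose_transpose, hV2] at h5
      simpa [Matrix.one_mulVec, dotProduct, sq, hy] using h5
    calc x ⬝ᵥ ((V * Matrix.diagonal (g * e * g) * Vᵀ) *ᵥ x)
        = x ⬝ᵥ (V *ᵥ (Matrix.diagonal (g * e * g) *ᵥ (Vᵀ *ᵥ x))) := by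
          rw [← Matrix.mulVec_mulVec, ← Matrix.mulVec_mulVec]
      _ = (x ᵥ* V) ⬝ᵥ (Matrix.diagonal (g * e * g) *ᵥ y) := by rw [Matrix.dotProduct_mulVec]
      _ = y ⬝ᵥ (Matrix.diagonal (g * e * g) *ᵥ y) := by rw [← Matrix.mulVec_transpose]
      _ = ∑ j, (g j * e j * g j) * y j ^ 2 := by
          simp only [dotProduct, Matrix.mulVec_diagonal, sq, Pi.mul_apply]
          exact Finset.sum_congr rfl fun j _ => by ring
      _ ≤ ∑ j, y j ^ 2 := by
          apply Finset.sum_le_sum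
          intro j _
          have hgeg : g j * e j * g j ≤ 1 := by
            rw [hge j]
            rcases eq_or_ne (Real.sqrt (e j)) 0 with h0 | h0
            · simp [hg, h0]
            · rw [hg]
              show Real.sqrt (e j) * (Real.sqrt (e j))⁻¹ ≤ 1
              rw [mul_inv_cancel₀ h0]
          nlinarith [sq_nonneg (y j)]
      _ = ∑ j, x j ^ 2 := hyx
  · -- value
    have h1 : tinner (A * M) A = (M * (Aᵀ * A)).trace := by
      show ((A * M)ᵀ * A).trace = _
      rw [Matrix.transpose_mul, Matrix.mul_assoc, hMt]
    rw [h1, hspec, hM]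
    have h2 : V * Matrix.diagonal g * Vᵀ * (V * Matrix.diagonal e * Vᵀ)
        = V * ((Matrix.diagonal g * Matrix.diagonal e) * Vᵀ) := by
      calc V * Matrix.diagonal g * Vᵀ * (V * Matrix.diagonal e * Vᵀ)
          = V * (Matrix.diagonal g * ((Vᵀ * V) * (Matrix.diagonal e * Vᵀ))) := by
            simp only [Matrix.mul_assoc]
        _ = V * ((Matrix.diagonal g * Matrix.diagonal e) * Vᵀ) := by
            rw [hV1]; simp only [Matrix.one_mul, Matrix.mul_assoc]
    rw [h2, Matrix.trace_mul_comm, Matrix.mul_assoc, hV1, Matrix.mul_one,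
      Matrix.diagonal_mul_diagonal, Matrix.trace_diagonal, hnn]
    exact Finset.sum_congr rfl fun j _ => hge j

lemma nuclearNorm_add_le (A B : Matrix (Fin d₁) (Fin d₂) ℝ) :
    nuclearNorm (A + B) ≤ nuclearNorm A + nuclearNorm B := by
  obtain ⟨C, hC, hCe⟩ := exists_contr_tinner_eq (A + B)
  rw [← hCe, tinner_add_right]
  exact add_le_add (tinner_le_nuclearNorm A C hC) (tinner_le_nuclearNorm B C hC)

lemma nuclearNorm_smul {c : ℝ} (hc : 0 ≤ c) (A : Matrix (Fin d₁) (Fin d₂) ℝ) :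
    nuclearNorm (c • A) = c * nuclearNorm A := by
  apply le_antisymm
  · obtain ⟨B, hB, hBe⟩ := exists_contr_tinner_eq (c • A)
    rw [← hBe, tinner_smul_right]
    exact mul_le_mul_of_nonneg_left (tinner_le_nuclearNorm A B hB) hc
  · obtain ⟨B, hB, hBe⟩ := exists_contr_tinner_eq A
    calc c * nuclearNorm A = c * tinner B A := by rw [hBe]
      _ = tinner B (c • A) := (tinner_smul_right c B A).symm
      _ ≤ nuclearNorm (c • A) := tinner_le_nuclearNorm _ _ hB

lemma nuclearNorm_neg (A : Matrix (Fin d₁) (Fin d₂) ℝ) : nuclearNorm (-A) = nuclearNorm A := by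
  apply le_antisymm
  · obtain ⟨B, hB, hBe⟩ := exists_contr_tinner_eq (-A)
    rw [← hBe, tinner_neg_right, ← tinner_neg_left]
    exact tinner_le_nuclearNorm A (-B) hB.neg
  · obtain ⟨B, hB, hBe⟩ := exists_contr_tinner_eq A
    rw [← hBe]
    calc tinner B A = tinner (-B) (-A) := by rw [tinner_neg_left, tinner_neg_right, neg_neg]
      _ ≤ nuclearNorm (-A) := tinner_le_nuclearNorm _ _ hB.neg

lemma nuclearNorm_sub_le (X Z Y : Matrix (Fin d₁) (Fin d₂) ℝ) :
    nuclearNorm (X - Y) ≤ nuclearNorm (X - Z) + nuclearNorm (Z - Y) := by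
  have h : X - Y = (X - Z) + (Z - Y) := by abel
  rw [h]; exact nuclearNorm_add_le _ _

lemma nuclearNorm_convex {a b : ℝ} (ha : 0 ≤ a) (hb : 0 ≤ b)
    (X Y : Matrix (Fin d₁) (Fin d₂) ℝ) :
    nuclearNorm (a • X + b • Y) ≤ a * nuclearNorm X + b * nuclearNorm Y := by
  calc nuclearNorm (a • X + b • Y) ≤ nuclearNorm (a • X) + nuclearNorm (b • Y) :=
        nuclearNorm_add_le _ _
    _ = a * nuclearNorm X + b * nuclearNorm Y := by rw [nuclearNorm_smul ha, nuclearNorm_smul hb]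

end Helpers

set_option maxHeartbeats 1000000

/-- Inequality (lem-bound-0) of Lemma 6: geometric decay of the excess objective of
the proximal gradient iterates, up to the statistical tolerance. -/
theorem excess_objective_geometric_decay {d₁ d₂ : ℕ}
    (μ α₂ α₃ τ₂ τ₃ τ lam qq Rq ω εbar δ εδ ζ v κ ξ : ℝ)
    (hμ : 0 ≤ μ) (hα₂ : μ / 2 < α₂) (hα₃ : 0 < α₃) (hτ₂ : 0 < τ₂) (hτ₃ : 0 < τ₃)
    (hτ : τ = max τ₂ τ₃) (hlam : 0 < lam) (hqq0 : 0 < qq) (hqq1 : qq ≤ 1)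
    (hRq : 0 < Rq) (hω : 0 < ω) (hεbar : 0 ≤ εbar) (hδ : 0 ≤ δ)
    (hεδ : εδ = 2 * min (δ / lam) ω) (hζ : ζ = τ * lam ^ (-qq) * Rq)
    (L Q : Matrix (Fin d₁) (Fin d₂) ℝ → ℝ)
    (gradL gradQ : Matrix (Fin d₁) (Fin d₂) ℝ → Matrix (Fin d₁) (Fin d₂) ℝ)
    (hdL : Differentiable ℝ L)
    (hgL : ∀ Θ Δ : Matrix (Fin d₁) (Fin d₂) ℝ, fderiv ℝ L Θ Δ = tinner (gradL Θ) Δ)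
    (hdQ : Differentiable ℝ Q)
    (hgQ : ∀ Θ Δ : Matrix (Fin d₁) (Fin d₂) ℝ, fderiv ℝ Q Θ Δ = tinner (gradQ Θ) Δ)
    (hRSC : ∀ Θ Θ' : Matrix (Fin d₁) (Fin d₂) ℝ,
      α₂ * frobNorm (Θ - Θ') ^ 2 - τ₂ * nuclearNorm (Θ - Θ') ^ 2 ≤
        L Θ - L Θ' - tinner (gradL Θ') (Θ - Θ'))
    (hRSM : ∀ Θ Θ' : Matrix (Fin d₁) (Fin d₂) ℝ,
      L Θ - L Θ' - tinner (gradL Θ') (Θ - Θ') ≤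
        α₃ * frobNorm (Θ - Θ') ^ 2 + τ₃ * nuclearNorm (Θ - Θ') ^ 2)
    (hQlow : ∀ Θ Θ' : Matrix (Fin d₁) (Fin d₂) ℝ,
      Q Θ' + tinner (gradQ Θ') (Θ - Θ') - μ / 2 * frobNorm (Θ - Θ') ^ 2 ≤ Q Θ)
    (hQup : ∀ Θ Θ' : Matrix (Fin d₁) (Fin d₂) ℝ,
      Q Θ ≤ Q Θ' + tinner (gradQ Θ') (Θ - Θ'))
    (Θhat : Matrix (Fin d₁) (Fin d₂) ℝ) (hhat_feas : nuclearNorm Θhat ≤ ω)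
    (hhat_min : ∀ Θ : Matrix (Fin d₁) (Fin d₂) ℝ, nuclearNorm Θ ≤ ω →
      L Θhat + Q Θhat + lam * nuclearNorm Θhat ≤ L Θ + Q Θ + lam * nuclearNorm Θ)
    (hG : ∃ G : Matrix (Fin d₁) (Fin d₂) ℝ,
      (∀ Θ : Matrix (Fin d₁) (Fin d₂) ℝ,
        nuclearNorm Θ ≥ nuclearNorm Θhat + tinner G (Θ - Θhat)) ∧
      ∀ Θ : Matrix (Fin d₁) (Fin d₂) ℝ, nuclearNorm Θ ≤ ω →
        tinner (gradL Θhat + gradQ Θhat + lam • G) (Θ - Θhat) ≥ 0)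
    (hv₃ : 2 * α₃ ≤ v) (hv₂ : (2 * α₂ - μ) / 4 ≤ v)
    (Θseq : ℕ → Matrix (Fin d₁) (Fin d₂) ℝ)
    (hseq_feas : ∀ t : ℕ, nuclearNorm (Θseq t) ≤ ω)
    (hiter : ∀ t : ℕ, ∀ Θ : Matrix (Fin d₁) (Fin d₂) ℝ, nuclearNorm Θ ≤ ω →
      tinner (gradL (Θseq t) + gradQ (Θseq t)) (Θseq (t + 1) - Θseq t) +
          v / 2 * frobNorm (Θseq (t + 1) - Θseq t) ^ 2 +
          lam * nuclearNorm (Θseq (t + 1)) ≤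
        tinner (gradL (Θseq t) + gradQ (Θseq t)) (Θ - Θseq t) +
          v / 2 * frobNorm (Θ - Θseq t) ^ 2 + lam * nuclearNorm Θ)
    (hlamq : lam ^ qq ≥ 256 * τ * Rq / (2 * α₂ - μ))
    (hζsmall : 512 * ζ < 2 * α₂ - μ)
    (hκ : κ = (1 - (2 * α₂ - μ) / (8 * v) + 512 * ζ / (2 * α₂ - μ)) /
              (1 - 512 * ζ / (2 * α₂ - μ)))
    (hκ0 : 0 < κ) (hκ1 : κ < 1)
    (hξ : ξ = 2 * τ * ((2 * α₂ - μ) / (8 * v) + 1024 * ζ / (2 * α₂ - μ) + 5) /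
              (1 - 512 * ζ / (2 * α₂ - μ)))
    (T : ℕ)
    (hT : ∀ t : ℕ, T ≤ t →
      (L (Θseq t) + Q (Θseq t) + lam * nuclearNorm (Θseq t)) -
          (L Θhat + Q Θhat + lam * nuclearNorm Θhat) ≤ δ ∧
      nuclearNorm (Θseq t - Θhat) ≤
        4 * Real.sqrt 2 * lam ^ (-(qq / 2)) * Rq ^ ((1 : ℝ) / 2) *
          frobNorm (Θseq t - Θhat) + εbar + εδ) :
    ∀ t : ℕ, T ≤ t →
      (L (Θseq t) + Q (Θseq t) + lam * nuclearNorm (Θseq t)) -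
          (L Θhat + Q Θhat + lam * nuclearNorm Θhat) ≤
        κ ^ (t - T) * ((L (Θseq T) + Q (Θseq T) + lam * nuclearNorm (Θseq T)) -
            (L Θhat + Q Θhat + lam * nuclearNorm Θhat)) +
          2 * ξ / (1 - κ) * (εbar ^ 2 + εδ ^ 2) := by
  classical
  obtain ⟨G, hG1, hG2⟩ := hG
  have hγ : (0:ℝ) < 2*α₂ - μ := by linarith
  have hv0 : (0:ℝ) < v := by linarith
  have hτ2τ : τ₂ ≤ τ := by rw [hτ]; exact le_max_left _ _
  have hτ3τ : τ₃ ≤ τ := by rw [hτ]; exact le_max_right _ _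
  have hτ0 : (0:ℝ) < τ := lt_of_lt_of_le hτ₂ hτ2τ
  have hζ0 : (0:ℝ) < ζ := by
    rw [hζ]
    have := Real.rpow_pos_of_pos hlam (-qq)
    positivity
  have hεδ0 : (0:ℝ) ≤ εδ := by
    rw [hεδ]
    have h1 : (0:ℝ) ≤ δ / lam := by positivity
    have h2 : (0:ℝ) ≤ min (δ / lam) ω := le_min h1 hω.le
    linarith only [h2]
  have hε2 : (0:ℝ) ≤ εbar ^ 2 + εδ ^ 2 := by positivity
  set α : ℝ := (2 * α₂ - μ) / (8 * v) with hαdef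
  have hα0 : 0 < α := by rw [hαdef]; positivity
  have hα1 : α ≤ 1 := by
    rw [hαdef, div_le_one (by positivity)]
    linarith
  have hva : v * α = (2 * α₂ - μ) / 8 := by
    rw [hαdef]; field_simp
  have hDel0 : ∀ s : ℕ, 0 ≤ (L (Θseq s) + Q (Θseq s) + lam * nuclearNorm (Θseq s)) -
      (L Θhat + Q Θhat + lam * nuclearNorm Θhat) := by
    intro s; have := hhat_min (Θseq s) (hseq_feas s); linarith only [this]
  -- squared cone bound
  have hcone : ∀ s : ℕ, T ≤ s →
      τ * nuclearNorm (Θseq s - Θhat) ^ 2 ≤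
        64 * ζ * frobNorm (Θseq s - Θhat) ^ 2 + 4 * τ * (εbar ^ 2 + εδ ^ 2) := by
    intro s hs
    obtain ⟨-, hc⟩ := hT s hs
    set c : ℝ := 4 * Real.sqrt 2 * lam ^ (-(qq / 2)) * Rq ^ ((1:ℝ) / 2) with hcdef
    have hc0 : 0 ≤ c := by
      rw [hcdef]
      have h1 := Real.rpow_pos_of_pos hlam (-(qq / 2))
      have h2 := Real.rpow_pos_of_pos hRq ((1:ℝ) / 2)
      positivity
    have hXX : lam ^ (-(qq / 2)) * lam ^ (-(qq / 2)) = lam ^ (-qq) := by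
      rw [← Real.rpow_add hlam]; ring_nf
    have hYY : Rq ^ ((1:ℝ) / 2) * Rq ^ ((1:ℝ) / 2) = Rq := by
      rw [← Real.rpow_add hRq]; norm_num
    have hc2 : c ^ 2 = 32 * lam ^ (-qq) * Rq := by
      calc c ^ 2 = 16 * (Real.sqrt 2 * Real.sqrt 2) *
            (lam ^ (-(qq / 2)) * lam ^ (-(qq / 2))) * (Rq ^ ((1:ℝ) / 2) * Rq ^ ((1:ℝ) / 2)) := by
            rw [hcdef]; ring
        _ = 32 * lam ^ (-qq) * Rq := by
            rw [hXX, hYY, Real.mul_self_sqrt (by norm_num : (0:ℝ) ≤ 2)]; ring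
    have hn0 := nuclearNorm_nonneg (Θseq s - Θhat)
    have hf0 := frobNorm_nonneg (Θseq s - Θhat)
    have hb : nuclearNorm (Θseq s - Θhat) ^ 2 ≤
        (c * frobNorm (Θseq s - Θhat) + εbar + εδ) ^ 2 := pow_le_pow_left₀ hn0 hc 2
    have hnsq : nuclearNorm (Θseq s - Θhat) ^ 2 ≤
        2 * c ^ 2 * frobNorm (Θseq s - Θhat) ^ 2 + 4 * (εbar ^ 2 + εδ ^ 2) := by
      have k1 := sq_nonneg (c * frobNorm (Θseq s - Θhat) - (εbar + εδ))
      have k2 := sq_nonneg (εbar - εδ)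
      linarith only [hb, k1, k2]
    have h64 : τ * (2 * c ^ 2) * frobNorm (Θseq s - Θhat) ^ 2
        = 64 * ζ * frobNorm (Θseq s - Θhat) ^ 2 := by
      rw [hc2, hζ]; ring
    have := mul_le_mul_of_nonneg_left hnsq hτ0.le
    linarith only [this, h64]
  -- lower curvature bound
  have hfb : ∀ s : ℕ, T ≤ s →
      3 * (2 * α₂ - μ) / 8 * frobNorm (Θseq s - Θhat) ^ 2 ≤
        ((L (Θseq s) + Q (Θseq s) + lam * nuclearNorm (Θseq s)) -
          (L Θhat + Q Θhat + lam * nuclearNorm Θhat)) + 4 * τ * (εbar ^ 2 + εδ ^ 2) := by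
    intro s hs
    have h1 := hRSC (Θseq s) Θhat
    have h2 := hQlow (Θseq s) Θhat
    have h3 := mul_le_mul_of_nonneg_left (hG1 (Θseq s)).le hlam.le
    have h4 := hG2 (Θseq s) (hseq_feas s)
    rw [tinner_add_left, tinner_add_left, tinner_smul_left] at h4
    have h5 := hcone s hs
    have h6 : τ₂ * nuclearNorm (Θseq s - Θhat) ^ 2 ≤ τ * nuclearNorm (Θseq s - Θhat) ^ 2 :=
      mul_le_mul_of_nonneg_right hτ2τ (sq_nonneg _)
    have h7 : 64 * ζ * frobNorm (Θseq s - Θhat) ^ 2 ≤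
        (2 * α₂ - μ) / 8 * frobNorm (Θseq s - Θhat) ^ 2 :=
      mul_le_mul_of_nonneg_right (by linarith only [hζsmall]) (sq_nonneg _)
    linarith only [h1, h2, h3, h4, h5, h6, h7]
  -- constants
  have hden : (0:ℝ) < 2 * α₂ - μ - 512 * ζ := by linarith
  have hpos : (0:ℝ) < 1 - 512 * ζ / (2 * α₂ - μ) := by
    rw [sub_pos, div_lt_one hγ]; linarith
  have hκeq : κ * (2 * α₂ - μ - 512 * ζ) = (2 * α₂ - μ) * (1 - α) + 512 * ζ := by
    rw [hκ, div_mul_eq_mul_div, div_eq_iff (ne_of_gt hpos)]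
    field_simp
  have hξeq : 2 * ξ * (2 * α₂ - μ - 512 * ζ)
      = (4 * α * (2 * α₂ - μ) + 4096 * ζ + 20 * (2 * α₂ - μ)) * τ := by
    rw [hξ, mul_div_assoc', div_mul_eq_mul_div, div_eq_iff (ne_of_gt hpos)]
    field_simp
    ring
  have hξ0 : 0 < ξ := by
    have h4 : (0:ℝ) < 4 * α * (2 * α₂ - μ) := mul_pos (by positivity) hγ
    have hsum : (0:ℝ) < 4 * α * (2 * α₂ - μ) + 4096 * ζ + 20 * (2 * α₂ - μ) := by
      linarith only [h4, hζ0, hγ]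
    have hrhs : (0:ℝ) < (4 * α * (2 * α₂ - μ) + 4096 * ζ + 20 * (2 * α₂ - μ)) * τ :=
      mul_pos hsum hτ0
    rcases le_or_gt ξ 0 with h | h
    · exfalso
      have hle : 2 * ξ * (2 * α₂ - μ - 512 * ζ) ≤ 0 :=
        mul_nonpos_of_nonpos_of_nonneg (by linarith only [h]) hden.le
      linarith only [hle, hrhs, hξeq]
    · exact h
  have h1κ : (0:ℝ) < 1 - κ := by linarith only [hκ1]
  -- one-step contraction
  have honestep : ∀ t : ℕ, T ≤ t →
      (L (Θseq (t + 1)) + Q (Θseq (t + 1)) + lam * nuclearNorm (Θseq (t + 1))) -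
        (L Θhat + Q Θhat + lam * nuclearNorm Θhat) ≤
      κ * ((L (Θseq t) + Q (Θseq t) + lam * nuclearNorm (Θseq t)) -
        (L Θhat + Q Θhat + lam * nuclearNorm Θhat)) + 2 * ξ * (εbar ^ 2 + εδ ^ 2) := by
    intro t ht
    have hA1 := hRSM (Θseq (t + 1)) (Θseq t)
    have hA2 := hQup (Θseq (t + 1)) (Θseq t)
    have hA4 := hRSC Θhat (Θseq t)
    have hA5 := hQlow Θhat (Θseq t)
    have hfneg : frobNorm (Θhat - Θseq t) = frobNorm (Θseq t - Θhat) := by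
      rw [show Θhat - Θseq t = -(Θseq t - Θhat) from (neg_sub _ _).symm, frobNorm_neg]
    have hnneg : nuclearNorm (Θhat - Θseq t) = nuclearNorm (Θseq t - Θhat) := by
      rw [show Θhat - Θseq t = -(Θseq t - Θhat) from (neg_sub _ _).symm, nuclearNorm_neg]
    rw [hfneg, hnneg] at hA4
    rw [hfneg] at hA5
    set Θa : Matrix (Fin d₁) (Fin d₂) ℝ := α • Θhat + (1 - α) • Θseq t with hΘa
    have hconv : nuclearNorm Θa ≤ α * nuclearNorm Θhat + (1 - α) * nuclearNorm (Θseq t) := by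
      rw [hΘa]; exact nuclearNorm_convex hα0.le (by linarith only [hα1]) _ _
    have hfeas : nuclearNorm Θa ≤ ω := by
      have h1 := mul_le_mul_of_nonneg_left hhat_feas hα0.le
      have h2 := mul_le_mul_of_nonneg_left (hseq_feas t) (by linarith only [hα1] : (0:ℝ) ≤ 1 - α)
      linarith only [h1, h2, hconv]
    have hA3 := hiter t Θa hfeas
    have hdiff : Θa - Θseq t = α • (Θhat - Θseq t) := by
      rw [hΘa, sub_smul, one_smul, smul_sub]; abel
    rw [hdiff, tinner_add_left, tinner_add_left, tinner_smul_right, tinner_smul_right,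
      frobNorm_smul, abs_of_nonneg hα0.le, hfneg] at hA3
    have hαnuc := mul_le_mul_of_nonneg_left hconv hlam.le
    have hgrad : tinner (gradL (Θseq t)) (Θhat - Θseq t) + tinner (gradQ (Θseq t)) (Θhat - Θseq t) ≤
        (L Θhat + Q Θhat) - (L (Θseq t) + Q (Θseq t))
          - (2 * α₂ - μ) / 2 * frobNorm (Θseq t - Θhat) ^ 2
          + τ₂ * nuclearNorm (Θseq t - Θhat) ^ 2 := by linarith only [hA4, hA5]
    have hgradα := mul_le_mul_of_nonneg_left hgrad hα0.le
    have hfu : α₃ * frobNorm (Θseq (t + 1) - Θseq t) ^ 2 ≤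
        v / 2 * frobNorm (Θseq (t + 1) - Θseq t) ^ 2 :=
      mul_le_mul_of_nonneg_right (by linarith only [hv₃] : α₃ ≤ v / 2) (sq_nonneg _)
    have hcoef2 : v / 2 * (α * frobNorm (Θseq t - Θhat)) ^ 2
        = (2 * α₂ - μ) * α / 16 * frobNorm (Θseq t - Θhat) ^ 2 := by
      linear_combination (frobNorm (Θseq t - Θhat) ^ 2 * α / 2) * hva
    have hdrop : 0 ≤ (2 * α₂ - μ) * α * frobNorm (Θseq t - Θhat) ^ 2 :=
      mul_nonneg (mul_nonneg hγ.le hα0.le) (sq_nonneg _)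
    have hraw : (L (Θseq (t + 1)) + Q (Θseq (t + 1)) + lam * nuclearNorm (Θseq (t + 1))) -
        (L Θhat + Q Θhat + lam * nuclearNorm Θhat) ≤
        (1 - α) * ((L (Θseq t) + Q (Θseq t) + lam * nuclearNorm (Θseq t)) -
          (L Θhat + Q Θhat + lam * nuclearNorm Θhat))
        + α * τ₂ * nuclearNorm (Θseq t - Θhat) ^ 2
        + τ₃ * nuclearNorm (Θseq (t + 1) - Θseq t) ^ 2 := by
      linarith only [hA1, hA2, hA3, hαnuc, hgradα, hfu, hcoef2, hdrop]
    have htri := nuclearNorm_sub_le (Θseq (t + 1)) Θhat (Θseq t)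
    rw [hnneg] at htri
    have hnu2 : nuclearNorm (Θseq (t + 1) - Θseq t) ^ 2 ≤
        2 * nuclearNorm (Θseq (t + 1) - Θhat) ^ 2 + 2 * nuclearNorm (Θseq t - Θhat) ^ 2 := by
      have k0 := nuclearNorm_nonneg (Θseq (t + 1) - Θseq t)
      have k1 : nuclearNorm (Θseq (t + 1) - Θseq t) ^ 2 ≤
          (nuclearNorm (Θseq (t + 1) - Θhat) + nuclearNorm (Θseq t - Θhat)) ^ 2 :=
        pow_le_pow_left₀ k0 htri 2
      have k2 := sq_nonneg (nuclearNorm (Θseq (t + 1) - Θhat) - nuclearNorm (Θseq t - Θhat))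
      linarith only [k1, k2]
    have hτ3nu : τ₃ * nuclearNorm (Θseq (t + 1) - Θseq t) ^ 2 ≤
        128 * ζ * frobNorm (Θseq (t + 1) - Θhat) ^ 2 + 128 * ζ * frobNorm (Θseq t - Θhat) ^ 2
          + 16 * τ * (εbar ^ 2 + εδ ^ 2) := by
      have h1 : τ₃ * nuclearNorm (Θseq (t + 1) - Θseq t) ^ 2 ≤
          τ * nuclearNorm (Θseq (t + 1) - Θseq t) ^ 2 :=
        mul_le_mul_of_nonneg_right hτ3τ (sq_nonneg _)
      have h2 := mul_le_mul_of_nonneg_left hnu2 hτ0.le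
      have h3 := hcone t ht
      have h4 := hcone (t + 1) (by omega)
      linarith only [h1, h2, h3, h4]
    have hant : α * τ₂ * nuclearNorm (Θseq t - Θhat) ^ 2 ≤
        64 * ζ * frobNorm (Θseq t - Θhat) ^ 2 + 4 * τ * (εbar ^ 2 + εδ ^ 2) := by
      have h0 : α * τ₂ ≤ τ₂ := mul_le_of_le_one_left hτ₂.le hα1
      have h1 : α * τ₂ ≤ τ := le_trans h0 hτ2τ
      have h2 := mul_le_mul_of_nonneg_right h1 (sq_nonneg (nuclearNorm (Θseq t - Θhat)))
      linarith only [h2, hcone t ht]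
    have hcomb : (L (Θseq (t + 1)) + Q (Θseq (t + 1)) + lam * nuclearNorm (Θseq (t + 1))) -
        (L Θhat + Q Θhat + lam * nuclearNorm Θhat) ≤
        (1 - α) * ((L (Θseq t) + Q (Θseq t) + lam * nuclearNorm (Θseq t)) -
          (L Θhat + Q Θhat + lam * nuclearNorm Θhat))
        + 192 * ζ * frobNorm (Θseq t - Θhat) ^ 2
        + 128 * ζ * frobNorm (Θseq (t + 1) - Θhat) ^ 2
        + 20 * τ * (εbar ^ 2 + εδ ^ 2) := by
      linarith only [hraw, hτ3nu, hant]
    have hγcomb := mul_le_mul_of_nonneg_left hcomb hγ.le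
    have hfbt := mul_le_mul_of_nonneg_left (hfb t ht)
      (by positivity : (0:ℝ) ≤ 8 / 3 * ζ)
    have hfbt1 := mul_le_mul_of_nonneg_left (hfb (t + 1) (by omega))
      (by positivity : (0:ℝ) ≤ 8 / 3 * ζ)
    have hz1 : 0 ≤ ζ * ((L (Θseq (t + 1)) + Q (Θseq (t + 1)) + lam * nuclearNorm (Θseq (t + 1))) -
        (L Θhat + Q Θhat + lam * nuclearNorm Θhat)) := mul_nonneg hζ0.le (hDel0 (t + 1))
    have hz2 : 0 ≤ ζ * τ * (εbar ^ 2 + εδ ^ 2) :=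
      mul_nonneg (mul_nonneg hζ0.le hτ0.le) hε2
    have hz3 : 0 ≤ α * (2 * α₂ - μ) * τ * (εbar ^ 2 + εδ ^ 2) :=
      mul_nonneg (mul_nonneg (mul_nonneg hα0.le hγ.le) hτ0.le) hε2
    have hstep : (2 * α₂ - μ - 512 * ζ) *
        ((L (Θseq (t + 1)) + Q (Θseq (t + 1)) + lam * nuclearNorm (Θseq (t + 1))) -
          (L Θhat + Q Θhat + lam * nuclearNorm Θhat)) ≤
        ((2 * α₂ - μ) * (1 - α) + 512 * ζ) *
          ((L (Θseq t) + Q (Θseq t) + lam * nuclearNorm (Θseq t)) -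
            (L Θhat + Q Θhat + lam * nuclearNorm Θhat))
        + (4 * α * (2 * α₂ - μ) + 4096 * ζ + 20 * (2 * α₂ - μ)) * τ * (εbar ^ 2 + εδ ^ 2) := by
      linarith only [hγcomb, hfbt, hfbt1, hz1, hz2, hz3]
    have e1 : (2 * α₂ - μ - 512 * ζ) *
        (κ * ((L (Θseq t) + Q (Θseq t) + lam * nuclearNorm (Θseq t)) -
          (L Θhat + Q Θhat + lam * nuclearNorm Θhat)))
        = ((2 * α₂ - μ) * (1 - α) + 512 * ζ) *
          ((L (Θseq t) + Q (Θseq t) + lam * nuclearNorm (Θseq t)) -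
            (L Θhat + Q Θhat + lam * nuclearNorm Θhat)) := by
      linear_combination ((L (Θseq t) + Q (Θseq t) + lam * nuclearNorm (Θseq t)) -
        (L Θhat + Q Θhat + lam * nuclearNorm Θhat)) * hκeq
    have e2 : (2 * α₂ - μ - 512 * ζ) * (2 * ξ * (εbar ^ 2 + εδ ^ 2))
        = (4 * α * (2 * α₂ - μ) + 4096 * ζ + 20 * (2 * α₂ - μ)) * τ * (εbar ^ 2 + εδ ^ 2) := by
      linear_combination (εbar ^ 2 + εδ ^ 2) * hξeq
    have hmul : (2 * α₂ - μ - 512 * ζ) *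
        ((L (Θseq (t + 1)) + Q (Θseq (t + 1)) + lam * nuclearNorm (Θseq (t + 1))) -
          (L Θhat + Q Θhat + lam * nuclearNorm Θhat)) ≤
        (2 * α₂ - μ - 512 * ζ) *
          (κ * ((L (Θseq t) + Q (Θseq t) + lam * nuclearNorm (Θseq t)) -
            (L Θhat + Q Θhat + lam * nuclearNorm Θhat)) + 2 * ξ * (εbar ^ 2 + εδ ^ 2)) := by
      linarith only [hstep, e1, e2]
    exact le_of_mul_le_mul_left hmul hden
  -- geometric iteration
  have htail : 0 ≤ 2 * ξ / (1 - κ) * (εbar ^ 2 + εδ ^ 2) := by positivity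
  intro t ht
  induction t, ht using Nat.le_induction with
  | base =>
      simp only [Nat.sub_self, pow_zero, one_mul]
      linarith only [htail]
  | succ t ht IH =>
      have hos := honestep t ht
      have hIH := mul_le_mul_of_nonneg_left IH hκ0.le
      have hpow : κ ^ (t + 1 - T) = κ * κ ^ (t - T) := by
        rw [show t + 1 - T = (t - T) + 1 from by omega, pow_succ]; ring
      have hid : κ * (2 * ξ / (1 - κ) * (εbar ^ 2 + εδ ^ 2)) + 2 * ξ * (εbar ^ 2 + εδ ^ 2)
          = 2 * ξ / (1 - κ) * (εbar ^ 2 + εδ ^ 2) := by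
        field_simp
        ring
      rw [hpow]
      linarith only [hos, hIH, hid]
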